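/- Let n ≥ 1, let V ⊆ ℂⁿ ⊕ ℂⁿ be a maximal isotropic subspace (isotropic of dimension n for B), and let w₁, w₂ ∈ Λ(ℂⁿ) be nonzero elements with d_{(β,γ)} w₁ = 0 and d_{(β,γ)} w₂ = 0 for every (β,γ) ∈ V. Then there exists a nonzero constant c ∈ ℂ with w₂ = c · w₁. -/

import Mathlib

open Matrix

noncomputable section

/-- The symmetric bilinear form `B((β,γ),(β',γ')) = Σ_t (β_t γ'_t + β'_t γ_t)` on `ℂⁿ ⊕ ℂⁿ`. -/
def Bform (n : ℕ) (p q : (Fin n → ℂ) × (Fin n → ℂ)) : ℂ :=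
  ∑ t, (p.1 t * q.2 t + q.1 t * p.2 t)

/-- The Grassmann (exterior) algebra `Λ(ℂⁿ)` on `n` generators. -/
abbrev GA (n : ℕ) := ExteriorAlgebra ℂ (Fin n → ℂ)

/-- `x_t` : left exterior multiplication by the `t`-th standard basis vector `e_t`. -/
noncomputable def Xop (n : ℕ) (t : Fin n) : GA n →ₗ[ℂ] GA n :=
  LinearMap.mulLeft ℂ (ExteriorAlgebra.ι ℂ (Pi.single t 1))

/-- `∂_t` : left interior multiplication (contraction) with the `t`-th dual basis vector. -/
noncomputable def Dop (n : ℕ) (t : Fin n) : GA n →ₗ[ℂ] GA n :=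
  CliffordAlgebra.contractLeft (LinearMap.proj t)

/-- The operator `d_{(β,γ)} = Σ_t (β_t ∂_t + γ_t x_t)` on `Λ(ℂⁿ)`. -/
noncomputable def dOp (n : ℕ) (p : (Fin n → ℂ) × (Fin n → ℂ)) : GA n →ₗ[ℂ] GA n :=
  ∑ t, (p.1 t • Dop n t + p.2 t • Xop n t)

namespace Prf
variable {n : ℕ}

lemma isOrtho_zero (a b : Fin n → ℂ) : (0 : QuadraticForm ℂ (Fin n → ℂ)).IsOrtho a b := by
  simp [QuadraticMap.IsOrtho]

lemma Xop_anti (t s : Fin n) : Xop n t * Xop n s + Xop n s * Xop n t = 0 := by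
  refine LinearMap.ext fun x => ?_
  simp only [LinearMap.add_apply, Module.End.mul_apply, Xop, LinearMap.mulLeft_apply,
    LinearMap.zero_apply, ← mul_assoc, ← add_mul]
  rw [CliffordAlgebra.ι_mul_ι_add_swap_of_isOrtho (isOrtho_zero _ _), zero_mul]

lemma Dop_anti (t s : Fin n) : Dop n t * Dop n s + Dop n s * Dop n t = 0 := by
  refine LinearMap.ext fun x => ?_
  simp only [LinearMap.add_apply, Module.End.mul_apply, Dop, LinearMap.zero_apply]
  rw [CliffordAlgebra.contractLeft_comm]
  exact neg_add_cancel _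

lemma Dop_Xop (t s : Fin n) :
    Dop n t * Xop n s + Xop n s * Dop n t = ((Pi.single s 1 : Fin n → ℂ) t) • 1 := by
  refine LinearMap.ext fun x => ?_
  simp only [LinearMap.add_apply, Module.End.mul_apply, Dop, Xop, LinearMap.mulLeft_apply,
    LinearMap.smul_apply, Module.End.one_apply]
  rw [CliffordAlgebra.contractLeft_ι_mul, LinearMap.proj_apply]
  abel



lemma term_anti (t s : Fin n) (a b c d : ℂ) :
    (a • Dop n t + b • Xop n t) * (c • Dop n s + d • Xop n s)
      + (c • Dop n s + d • Xop n s) * (a • Dop n t + b • Xop n t)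
      = ((a * d + c * b) * (if t = s then 1 else 0)) • 1 := by
  have h1 : Dop n t * Dop n s = -(Dop n s * Dop n t) :=
    eq_neg_of_add_eq_zero_left (Dop_anti t s)
  have h2 : Xop n t * Xop n s = -(Xop n s * Xop n t) :=
    eq_neg_of_add_eq_zero_left (Xop_anti t s)
  have h3 : Dop n t * Xop n s = (if t = s then (1:ℂ) else 0) • 1 - Xop n s * Dop n t := by
    refine eq_sub_of_add_eq ?_
    rw [Dop_Xop t s, Pi.single_apply]
  have h4 : Xop n t * Dop n s = (if t = s then (1:ℂ) else 0) • 1 - Dop n s * Xop n t := by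
    refine eq_sub_of_add_eq ?_
    rw [add_comm, Dop_Xop s t, Pi.single_apply]
    congr 1
    simp [eq_comm]
  simp only [add_mul, mul_add, smul_mul_assoc, mul_smul_comm, smul_smul, h1, h2, h3, h4]
  module

lemma dOp_anticomm (p q : (Fin n → ℂ) × (Fin n → ℂ)) :
    dOp n p * dOp n q + dOp n q * dOp n p = Bform n p q • 1 := by
  unfold dOp Bform
  rw [Finset.sum_mul_sum, Finset.sum_mul_sum]
  rw [Finset.sum_comm (γ := Fin n)]
  rw [← Finset.sum_add_distrib]
  simp only [← Finset.sum_add_distrib]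
  rw [Finset.sum_congr rfl (fun s _ => Finset.sum_congr rfl
    (fun t _ => term_anti t s (p.1 t) (p.2 t) (q.1 s) (q.2 s)))]
  simp only [mul_ite, mul_one, mul_zero, ite_smul, zero_smul, Finset.sum_ite_eq', Finset.sum_ite_eq,
    Finset.mem_univ, if_true, add_smul, Finset.sum_smul]
def mon (n : ℕ) (l : List (Fin n)) : GA n :=
  (l.map fun t => ExteriorAlgebra.ι ℂ (Pi.single t (1:ℂ))).prod

lemma mon_nil : mon n [] = 1 := by simp [mon]

lemma mon_cons (a : Fin n) (l : List (Fin n)) :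
    mon n (a :: l) = ExteriorAlgebra.ι ℂ (Pi.single a (1:ℂ)) * mon n l := by simp [mon]

/-- span of the sorted monomials -/
def TT (n : ℕ) : Submodule ℂ (GA n) :=
  Submodule.span ℂ (mon n '' {l | l.Pairwise (· < ·)})

lemma insertion : ∀ (l : List (Fin n)), l.Pairwise (· < ·) → ∀ t : Fin n,
    ExteriorAlgebra.ι ℂ (Pi.single t (1:ℂ)) * mon n l ∈
      Submodule.span ℂ (mon n '' {m | m.Pairwise (· < ·) ∧ ∀ x ∈ m, x = t ∨ x ∈ l}) := by
  intro l
  induction l with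
  | nil =>
    intro _ t
    refine Submodule.subset_span ⟨[t], ⟨List.pairwise_singleton _ t, by simp⟩, ?_⟩
    simp [mon]
  | cons a l' IH =>
    intro hs t
    rw [List.pairwise_cons] at hs
    obtain ⟨ha, hs'⟩ := hs
    rcases lt_trichotomy t a with h1 | h1 | h1
    · refine Submodule.subset_span ⟨t :: a :: l', ⟨?_, ?_⟩, mon_cons _ _⟩
      · rw [List.pairwise_cons]
        exact ⟨fun b hb => by
          rcases List.mem_cons.1 hb with rfl | hb
          · exact h1
          · exact h1.trans (ha b hb), List.pairwise_cons.2 ⟨ha, hs'⟩⟩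
      · intro x hx
        rcases List.mem_cons.1 hx with rfl | hx
        · exact Or.inl rfl
        · exact Or.inr hx
    · subst h1
      rw [mon_cons, ← mul_assoc, ExteriorAlgebra.ι_sq_zero, zero_mul]
      exact Submodule.zero_mem _
    · rw [mon_cons, ← mul_assoc,
        CliffordAlgebra.ι_mul_ι_comm_of_isOrtho (isOrtho_zero _ _), neg_mul, mul_assoc]
      refine Submodule.neg_mem _ ?_
      have hIH := IH hs' t
      have hle : Submodule.span ℂ (mon n '' {m | m.Pairwise (· < ·) ∧ ∀ x ∈ m, x = t ∨ x ∈ l'}) ≤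
          Submodule.comap (LinearMap.mulLeft ℂ (ExteriorAlgebra.ι ℂ (Pi.single a (1:ℂ))))
            (Submodule.span ℂ
              (mon n '' {m | m.Pairwise (· < ·) ∧ ∀ x ∈ m, x = t ∨ x ∈ a :: l'})) := by
        rw [Submodule.span_le]
        rintro _ ⟨m, ⟨hm1, hm2⟩, rfl⟩
        simp only [SetLike.mem_coe, Submodule.mem_comap, LinearMap.mulLeft_apply]
        refine Submodule.subset_span ⟨a :: m, ⟨?_, ?_⟩, mon_cons _ _⟩
        · rw [List.pairwise_cons]
          refine ⟨fun b hb => ?_, hm1⟩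
          rcases hm2 b hb with rfl | hb'
          · exact h1
          · exact ha b hb'
        · intro x hx
          rcases List.mem_cons.1 hx with rfl | hx
          · exact Or.inr (List.mem_cons_self)
          · rcases hm2 x hx with rfl | hx'
            · exact Or.inl rfl
            · exact Or.inr (List.mem_cons_of_mem _ hx')
      exact hle hIH

lemma mulLeft_single_mem_TT {l : List (Fin n)} (hl : l.Pairwise (· < ·)) (t : Fin n) :
    ExteriorAlgebra.ι ℂ (Pi.single t (1:ℂ)) * mon n l ∈ TT n := by
  exact Submodule.span_mono (Set.image_mono (fun m hm => hm.1)) (insertion l hl t)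

lemma mon_mem_TT : ∀ l : List (Fin n), mon n l ∈ TT n := by
  intro l
  induction l with
  | nil => exact Submodule.subset_span ⟨[], List.Pairwise.nil, rfl⟩
  | cons a l' IH =>
    rw [mon_cons]
    have hle : TT n ≤ Submodule.comap
        (LinearMap.mulLeft ℂ (ExteriorAlgebra.ι ℂ (Pi.single a (1:ℂ)))) (TT n) := by
      rw [TT, Submodule.span_le]
      rintro _ ⟨m, hm, rfl⟩
      exact mulLeft_single_mem_TT hm a
    exact hle IH
lemma single_mem_TT (t : Fin n) : ExteriorAlgebra.ι ℂ (Pi.single t (1:ℂ)) ∈ TT n := by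
  simpa [mon_cons, mon_nil] using mon_mem_TT [t]

lemma ι_expand (m : Fin n → ℂ) :
    ExteriorAlgebra.ι ℂ m = ∑ t, m t • ExteriorAlgebra.ι ℂ (Pi.single t (1:ℂ)) := by
  have hm : m = ∑ t, m t • (Pi.single t 1 : Fin n → ℂ) := by
    funext s
    simp [Pi.single_apply]
  conv_lhs => rw [hm]
  rw [map_sum]
  exact Finset.sum_congr rfl fun t _ => by rw [_root_.map_smul]

lemma mem_and_mul_mem (x : GA n) : x ∈ TT n ∧ ∀ y ∈ TT n, x * y ∈ TT n := by
  induction x using CliffordAlgebra.induction with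
  | algebraMap r =>
    constructor
    · rw [Algebra.algebraMap_eq_smul_one]
      exact Submodule.smul_mem _ _ (mon_nil ▸ mon_mem_TT [])
    · intro y hy
      rw [← Algebra.smul_def]
      exact Submodule.smul_mem _ _ hy
  | ι m =>
    constructor
    · rw [ι_expand m]
      exact Submodule.sum_mem _ fun t _ => Submodule.smul_mem _ _ (single_mem_TT t)
    · intro y hy
      have hle : TT n ≤ Submodule.comap (LinearMap.mulLeft ℂ (ExteriorAlgebra.ι ℂ m)) (TT n) := by
        rw [TT, Submodule.span_le]
        rintro _ ⟨l, hl, rfl⟩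
        simp only [SetLike.mem_coe, Submodule.mem_comap, LinearMap.mulLeft_apply]
        rw [ι_expand m, Finset.sum_mul]
        exact Submodule.sum_mem _ fun t _ => by
          rw [smul_mul_assoc]
          exact Submodule.smul_mem _ _ (mulLeft_single_mem_TT hl t)
      exact hle hy
  | mul a b ha hb =>
    exact ⟨ha.2 b hb.1, fun y hy => by rw [mul_assoc]; exact ha.2 _ (hb.2 y hy)⟩
  | add a b ha hb =>
    exact ⟨Submodule.add_mem _ ha.1 hb.1,
      fun y hy => by rw [add_mul]; exact Submodule.add_mem _ (ha.2 y hy) (hb.2 y hy)⟩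

def GG (n : ℕ) : Finset (Fin n) → GA n := fun S => mon n (S.sort (· ≤ ·))

lemma span_GG_top : Submodule.span ℂ (Set.range (GG n)) = ⊤ := by
  rw [eq_top_iff]
  intro x _
  have hx : x ∈ TT n := (mem_and_mul_mem x).1
  refine Submodule.span_le.2 ?_ hx
  rintro _ ⟨l, hl, rfl⟩
  have hnd : l.Nodup := hl.nodup
  have hsort : (l.toFinset.sort (· ≤ ·)) = l :=
    (List.toFinset_sort _ hnd).2 (List.Pairwise.imp le_of_lt hl)
  exact Submodule.subset_span ⟨l.toFinset, by rw [GG, hsort]⟩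

lemma ga_finite : Module.Finite ℂ (GA n) := by
  classical
  exact ⟨⟨Finset.image (GG n) Finset.univ, by
    rw [Finset.coe_image, Finset.coe_univ, Set.image_univ, span_GG_top]⟩⟩

lemma ga_finrank_le : Module.finrank ℂ (GA n) ≤ 2 ^ n := by
  have h2 := finrank_range_le_card (R := ℂ) (GG n)
  unfold Set.finrank at h2
  rw [span_GG_top, finrank_top, Fintype.card_finset, Fintype.card_fin] at h2
  exact h2
section Proj

variable {A Astar : Fin n → (GA n →ₗ[ℂ] GA n)}
variable (hAA : ∀ i j, A i * A j + A j * A i = 0)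
variable (hAX : ∀ i j, A i * Astar j + Astar j * A i = (if i = j then (1:ℂ) else 0) • 1)

local notation "EE" => fun i => A i * Astar i

include hAA hAX

lemma A_sq (i : Fin n) : A i * A i = 0 := by
  have h := hAA i i
  have h2 : (2:ℂ) • (A i * A i) = 0 := by
    rw [two_smul]; exact h
  have := smul_eq_zero.1 h2
  simpa using this

lemma A_comm_EE {i j : Fin n} (hij : i ≠ j) : A i * (EE j) = (EE j) * A i := by
  have h1 : A i * A j = -(A j * A i) := eq_neg_of_add_eq_zero_left (hAA i j)
  have h2 : A i * Astar j = -(Astar j * A i) := by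
    refine eq_neg_of_add_eq_zero_left ?_
    have := hAX i j
    rwa [if_neg hij, zero_smul] at this
  calc A i * (A j * Astar j) = (A i * A j) * Astar j := by rw [mul_assoc]
  _ = -(A j * (A i * Astar j)) := by rw [h1]; exact (neg_mul (A j * A i : Module.End ℂ (GA n)) (Astar j)).trans (congrArg Neg.neg (mul_assoc (A j : Module.End ℂ (GA n)) (A i) (Astar j)))
  _ = (A j * (Astar j * A i)) := by rw [h2]; exact (congrArg Neg.neg (mul_neg (A j : Module.End ℂ (GA n)) (Astar j * A i))).trans (neg_neg _)
  _ = (A j * Astar j) * A i := by rw [mul_assoc]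

lemma A_mul_EEprod_comm (i : Fin n) :
    ∀ l : List (Fin n), i ∉ l →
      A i * (l.map EE).prod = (l.map EE).prod * A i := by
  intro l
  induction l with
  | nil => simp
  | cons j l' IH =>
    intro hi
    have hij : i ≠ j := fun h => hi (h ▸ List.mem_cons_self)
    have hi' : i ∉ l' := fun h => hi (List.mem_cons_of_mem _ h)
    rw [List.map_cons, List.prod_cons, ← mul_assoc, A_comm_EE hAA hAX hij, mul_assoc,
      IH hi']
    simp [mul_assoc]

lemma A_mul_EEprod_zero (i : Fin n) :
    ∀ l : List (Fin n), i ∈ l → A i * (l.map EE).prod = 0 := by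
  intro l
  induction l with
  | nil => intro h; exact absurd h (List.not_mem_nil)
  | cons j l' IH =>
    intro hi
    rw [List.map_cons, List.prod_cons, ← mul_assoc]
    by_cases hij : i = j
    · subst hij
      rw [show A i * (A i * Astar i) = (A i * A i) * Astar i by rw [mul_assoc],
        A_sq hAA hAX, zero_mul, zero_mul]
    · rw [A_comm_EE hAA hAX hij, mul_assoc, IH (by
        rcases List.mem_cons.1 hi with h | h
        · exact absurd h hij
        · exact h), mul_zero]

lemma EEprod_fixed (w : GA n) (hw : ∀ i, A i w = 0) :
    ∀ l : List (Fin n), ((l.map EE).prod) w = w := by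
  intro l
  induction l with
  | nil => simp
  | cons j l' IH =>
    rw [List.map_cons, List.prod_cons, Module.End.mul_apply, IH, Module.End.mul_apply]
    have h := LinearMap.congr_fun (hAX j j) w
    simp only [eq_self_iff_true, if_true, one_smul, LinearMap.add_apply, Module.End.mul_apply,
      Module.End.one_apply] at h
    rw [hw j, map_zero, add_zero] at h
    exact h

lemma trace_EEprod :
    ∀ l : List (Fin n), l.Nodup →
      (2:ℂ) ^ l.length * LinearMap.trace ℂ (GA n) ((l.map EE).prod)
        = LinearMap.trace ℂ (GA n) 1 := by
  haveI : Module.Finite ℂ (GA n) := ga_finite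
  intro l
  induction l with
  | nil => simp
  | cons i l' IH =>
    intro hnd
    rw [List.nodup_cons] at hnd
    obtain ⟨hi, hnd'⟩ := hnd
    set Q := (l'.map EE).prod with hQ
    have hcomm : Q * A i = A i * Q := (A_mul_EEprod_comm hAA hAX i l' hi).symm
    have h2 : Astar i * A i = 1 - A i * Astar i := by
      have h := hAX i i
      rw [if_pos rfl, one_smul] at h
      exact eq_sub_of_add_eq' h
    have hkey : LinearMap.trace ℂ (GA n) ((A i * Astar i) * Q)
        = LinearMap.trace ℂ (GA n) Q - LinearMap.trace ℂ (GA n) ((A i * Astar i) * Q) :=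
      calc LinearMap.trace ℂ (GA n) ((A i * Astar i) * Q)
          = LinearMap.trace ℂ (GA n) (A i * (Astar i * Q)) := by rw [mul_assoc]
        _ = LinearMap.trace ℂ (GA n) ((Astar i * Q) * A i) := LinearMap.trace_mul_comm ℂ _ _
        _ = LinearMap.trace ℂ (GA n) ((Astar i * A i) * Q) := by
            rw [mul_assoc, hcomm, ← mul_assoc]
        _ = LinearMap.trace ℂ (GA n) ((1 - A i * Astar i) * Q) := by rw [h2]
        _ = LinearMap.trace ℂ (GA n) Q - LinearMap.trace ℂ (GA n) ((A i * Astar i) * Q) := by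
            rw [sub_mul, one_mul, map_sub]
    have h3 : (2:ℂ) * LinearMap.trace ℂ (GA n) ((A i * Astar i) * Q)
        = LinearMap.trace ℂ (GA n) Q := by linear_combination hkey
    rw [List.map_cons, List.prod_cons, List.length_cons, pow_succ]
    calc (2:ℂ) ^ l'.length * 2 * LinearMap.trace ℂ (GA n) ((A i * Astar i) * Q)
        = (2:ℂ) ^ l'.length * ((2:ℂ) * LinearMap.trace ℂ (GA n) ((A i * Astar i) * Q)) := by ring
      _ = (2:ℂ) ^ l'.length * LinearMap.trace ℂ (GA n) Q := by rw [h3]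
      _ = LinearMap.trace ℂ (GA n) 1 := IH hnd'

end Proj
end Prf

/-- two nonzero elements of `Λ(ℂⁿ)` annihilated by all operators coming
from one maximal isotropic subspace are proportional. -/


theorem annihilated_elements_proportional
    (n : ℕ) (hn : 1 ≤ n) (V : Submodule ℂ ((Fin n → ℂ) × (Fin n → ℂ)))
    (hiso : ∀ p ∈ V, ∀ q ∈ V, Bform n p q = 0)
    (hdim : Module.finrank ℂ ↥V = n)
    (w₁ w₂ : GA n) (hw₁ : w₁ ≠ 0) (hw₂ : w₂ ≠ 0)
    (hann₁ : ∀ p ∈ V, dOp n p w₁ = 0) (hann₂ : ∀ p ∈ V, dOp n p w₂ = 0) :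
    ∃ c : ℂ, c ≠ 0 ∧ w₂ = c • w₁ := by
  classical
  haveI : Module.Finite ℂ (GA n) := Prf.ga_finite
  -- basis of V
  let b : Module.Basis (Fin n) ℂ V := Module.finBasisOfFinrankEq ℂ V hdim
  let f : Fin n → (Fin n → ℂ) × (Fin n → ℂ) := fun i => (b i : _)
  have hfV : ∀ i, f i ∈ V := fun i => (b i).2
  -- dual family g
  have hext : ∀ i : Fin n, ∃ φ : ((Fin n → ℂ) × (Fin n → ℂ)) →ₗ[ℂ] ℂ,
      φ.comp V.subtype = b.coord i := fun i => LinearMap.exists_extend (b.coord i)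
  choose φ hφ using hext
  let g : Fin n → (Fin n → ℂ) × (Fin n → ℂ) := fun i =>
    (fun t => φ i (0, Pi.single t 1), fun t => φ i (Pi.single t 1, 0))
  have hBg : ∀ (i : Fin n) (p : (Fin n → ℂ) × (Fin n → ℂ)), Bform n p (g i) = φ i p := by
    intro i p
    have hp : p = ∑ t, (p.1 t • ((Pi.single t 1 : Fin n → ℂ), (0 : Fin n → ℂ))
        + p.2 t • ((0 : Fin n → ℂ), (Pi.single t 1 : Fin n → ℂ))) := by
      refine Prod.ext ?_ ?_ <;> funext s <;>
        simp [Prod.fst_sum, Prod.snd_sum, Finset.sum_apply, Pi.single_apply]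
    calc Bform n p (g i) = ∑ t, (p.1 t * φ i (Pi.single t 1, 0)
        + φ i (0, Pi.single t 1) * p.2 t) := rfl
      _ = ∑ t, (p.1 t • φ i ((Pi.single t 1 : Fin n → ℂ), (0 : Fin n → ℂ))
          + p.2 t • φ i ((0 : Fin n → ℂ), (Pi.single t 1 : Fin n → ℂ))) := by
          refine Finset.sum_congr rfl fun t _ => ?_
          simp [smul_eq_mul, mul_comm]
      _ = φ i (∑ t, (p.1 t • ((Pi.single t 1 : Fin n → ℂ), (0 : Fin n → ℂ))
          + p.2 t • ((0 : Fin n → ℂ), (Pi.single t 1 : Fin n → ℂ)))) := by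
          rw [map_sum]
          refine Finset.sum_congr rfl fun t _ => ?_
          rw [map_add, _root_.map_smul, _root_.map_smul]
      _ = φ i p := by rw [← hp]
  have hfg : ∀ i j, Bform n (f i) (g j) = if i = j then 1 else 0 := by
    intro i j
    rw [hBg j (f i)]
    have : φ j (V.subtype (b i)) = b.coord j (b i) := by rw [← hφ j]; rfl
    rw [show f i = V.subtype (b i) from rfl, this, Module.Basis.coord_apply, Module.Basis.repr_self,
      Finsupp.single_apply]
  -- the CAR operators
  set A : Fin n → (GA n →ₗ[ℂ] GA n) := fun i => dOp n (f i) with hA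
  set Astar : Fin n → (GA n →ₗ[ℂ] GA n) := fun i => dOp n (g i) with hAstar
  have hAA : ∀ i j, A i * A j + A j * A i = 0 := by
    intro i j
    rw [hA]
    rw [Prf.dOp_anticomm (f i) (f j), hiso _ (hfV i) _ (hfV j), zero_smul]
  have hAX : ∀ i j, A i * Astar j + Astar j * A i = (if i = j then (1:ℂ) else 0) • 1 := by
    intro i j
    rw [hA, hAstar]
    rw [Prf.dOp_anticomm (f i) (g j), hfg i j]
  -- the annihilator subspace and the projection onto it
  set W : Submodule ℂ (GA n) := ⨅ i, LinearMap.ker (A i) with hW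
  have hmemW : ∀ x : GA n, x ∈ W ↔ ∀ i, A i x = 0 := by
    intro x
    simp [hW, Submodule.mem_iInf, LinearMap.mem_ker]
  set P : GA n →ₗ[ℂ] GA n :=
    ((List.finRange n).map (fun i => A i * Astar i)).prod with hP
  have hproj : LinearMap.IsProj W P := by
    constructor
    · intro x
      rw [hmemW]
      intro i
      have h0 : A i * P = 0 :=
        Prf.A_mul_EEprod_zero hAA hAX i (List.finRange n) (List.mem_finRange i)
      calc A i (P x) = (A i * P) x := rfl
        _ = 0 := by rw [h0]; rfl
    · intro x hx
      exact Prf.EEprod_fixed hAA hAX x ((hmemW x).1 hx) (List.finRange n)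
  -- trace computation
  have htr : (2:ℂ) ^ n * LinearMap.trace ℂ (GA n) P = LinearMap.trace ℂ (GA n) 1 := by
    have := Prf.trace_EEprod hAA hAX (List.finRange n) (List.nodup_finRange n)
    rwa [List.length_finRange] at this
  have htrP : LinearMap.trace ℂ (GA n) P = (Module.finrank ℂ W : ℂ) := hproj.trace
  have htr1 : LinearMap.trace ℂ (GA n) 1 = (Module.finrank ℂ (GA n) : ℂ) := by
    rw [LinearMap.trace_one]
  -- finrank W ≤ 1
  have hnat : 2 ^ n * Module.finrank ℂ W = Module.finrank ℂ (GA n) := by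
    have : ((2 ^ n * Module.finrank ℂ W : ℕ) : ℂ) = ((Module.finrank ℂ (GA n) : ℕ) : ℂ) := by
      push_cast
      rw [← htrP, ← htr1, htr]
    exact_mod_cast this
  have hWle : Module.finrank ℂ W ≤ 1 := by
    have h2 : 2 ^ n * Module.finrank ℂ W ≤ 2 ^ n * 1 := by
      rw [hnat, mul_one]
      exact Prf.ga_finrank_le
    exact Nat.le_of_mul_le_mul_left h2 (pow_pos (by norm_num : (0:ℕ) < 2) n)
  -- conclude
  have hw₁W : w₁ ∈ W := (hmemW w₁).2 fun i => hann₁ (f i) (hfV i)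
  have hw₂W : w₂ ∈ W := (hmemW w₂).2 fun i => hann₂ (f i) (hfV i)
  have hspan : Submodule.span ℂ {w₁} = W := by
    apply Submodule.eq_of_le_of_finrank_le
    · rw [Submodule.span_le, Set.singleton_subset_iff]; exact hw₁W
    · rw [finrank_span_singleton hw₁]
      exact hWle
  have : w₂ ∈ Submodule.span ℂ {w₁} := hspan ▸ hw₂W
  obtain ⟨c, hc⟩ := Submodule.mem_span_singleton.1 this
  refine ⟨c, ?_, hc.symm⟩
  rintro rfl
  rw [zero_smul] at hc
  exact hw₂ hc.symm
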